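/- Let D be a completely metrizable locally convex topological vector space and let φ : ℝ≥0 ⇉ D be an upper hemicontinuous correspondence with convex and compact values such that the closed convex hull of φ([t, t+1]) is compact. Then for every t ∈ ℝ≥0 and every sequence (aₙ) ⊆ (0,1] with aₙ → 0, the intersection over m of the closed convex hulls of φ([t, t+aₘ]) is contained in φ(t). -/

import Mathlib

open scoped NNReal

def UpperHemicontinuousCorr {E D : Type*} [TopologicalSpace E] [TopologicalSpace D]
    (φ : E → Set D) : Prop :=
  ∀ x : E, ∀ U : Set D, IsOpen U → φ x ⊆ U → ∀ᶠ y in nhds x, φ y ⊆ U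

theorem stmt3 {D : Type*} [AddCommGroup D] [Module ℝ D] [UniformSpace D]
    [IsUniformAddGroup D] [ContinuousSMul ℝ D] [LocallyConvexSpace ℝ D]
    [TopologicalSpace.MetrizableSpace D] [CompleteSpace D]
    (φ : ℝ≥0 → Set D)
    (hUHC : UpperHemicontinuousCorr φ)
    (hconv : ∀ t, Convex ℝ (φ t)) (hcpt : ∀ t, IsCompact (φ t))
    (hch : ∀ t : ℝ≥0, IsCompact (closure (convexHull ℝ (⋃ s ∈ Set.Icc t (t + 1), φ s))))
    (t : ℝ≥0) (a : ℕ → ℝ≥0) (ha : ∀ n, a n ∈ Set.Ioc 0 1)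
    (hlim : Filter.Tendsto a Filter.atTop (nhds 0)) :
    (⋂ m : ℕ, closure (convexHull ℝ (⋃ s ∈ Set.Icc t (t + a m), φ s))) ⊆ φ t := by
  intro x hx
  by_contra hxt
  -- separate φ t from x
  obtain ⟨f, u, v, hfu, huv, hfx⟩ :=
    geometric_hahn_banach_compact_closed (hconv t) (hcpt t)
      (convex_singleton x) isClosed_singleton
      (Set.disjoint_singleton_right.mpr hxt)
  set U : Set D := f ⁻¹' Set.Iio u with hU
  have hUopen : IsOpen U := (isOpen_Iio).preimage f.continuous
  have hUconv : Convex ℝ U := (convex_Iio u).linear_preimage (f : D →ₗ[ℝ] ℝ)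
  have hφU : φ t ⊆ U := fun y hy => hfu y hy
  have hev := hUHC t U hUopen hφU
  -- find ε-ball contained in the eventual set
  obtain ⟨ε, hε, hball⟩ := Metric.eventually_nhds_iff_ball.mp hev
  -- choose m with a m < ε
  have : ∀ᶠ m in Filter.atTop, (a m : ℝ) < ε := by
    have : Filter.Tendsto (fun m => (a m : ℝ)) Filter.atTop (nhds 0) :=
      (NNReal.tendsto_coe.mpr hlim)
    exact this.eventually_lt_const hε
  obtain ⟨m, hm⟩ := this.exists
  -- every s ∈ Icc t (t + a m) is in the ball
  have hsub : (⋃ s ∈ Set.Icc t (t + a m), φ s) ⊆ U := by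
    intro y hy
    simp only [Set.mem_iUnion] at hy
    obtain ⟨s, ⟨hs1, hs2⟩, hys⟩ := hy
    refine hball s ?_ hys
    rw [Metric.mem_ball, NNReal.dist_eq]
    have h1 : (t : ℝ) ≤ s := hs1
    have h2 : (s : ℝ) ≤ t + a m := hs2
    rw [abs_of_nonneg (by linarith)]
    linarith
  have hhull : convexHull ℝ (⋃ s ∈ Set.Icc t (t + a m), φ s) ⊆ U :=
    convexHull_min hsub hUconv
  have hclos : closure (convexHull ℝ (⋃ s ∈ Set.Icc t (t + a m), φ s)) ⊆ f ⁻¹' Set.Iic u := by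
    refine closure_minimal (hhull.trans ?_) ((isClosed_Iic).preimage f.continuous)
    intro y hy
    have : f y < u := hy
    exact this.le
  have hxm : x ∈ closure (convexHull ℝ (⋃ s ∈ Set.Icc t (t + a m), φ s)) :=
    Set.mem_iInter.mp hx m
  have : f x ≤ u := hclos hxm
  have : v < f x := hfx x rfl
  linarith
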